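/- Let β > 0 satisfy e^{1/β} = 2 + 1/β (β ≈ 0.872453) and set ρ₁ = e^{−1/β} ≈ 0.317844. Fix any permutation π of {1,…,n} and suppose the price p > 0 is such that E[ Σ_{i=1}^n y_i(ω,π) ] = ρ₁. Then for every allocation rule x, the expected social welfare of the mechanism satisfies E[ Σ_{i=1}^n v_i(ω)(y_i(ω,π)) ] ≥ ρ₁ · E[ Σ_{i=1}^n v_i(ω)(x_i(ω)) ]; in particular the mechanism yields a ρ₁-approximation of the optimal expected social welfare. -/

import Mathlib

open MeasureTheory

/-- Auxiliary: the "water-filling" prefix-sum identity for sequential posted pricing. -/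
lemma seq_sum_eq {n : ℕ} (π : Equiv.Perm (Fin n)) (w : Fin n → ℝ) (hw : ∀ j, 0 ≤ w j) (m : ℕ) :
    ∑ j ∈ Finset.univ.filter (fun j => (π j : ℕ) < m),
        min (w j) (max 0 (1 - ∑ l ∈ Finset.univ.filter (fun l => π l < π j), w l))
      = min 1 (∑ j ∈ Finset.univ.filter (fun j => (π j : ℕ) < m), w j) := by
  induction m with
  | zero => simp
  | succ m ih =>
    by_cases hm : m < n
    · have hset : Finset.univ.filter (fun j => (π j : ℕ) < m + 1)
          = insert (π.symm ⟨m, hm⟩) (Finset.univ.filter (fun j => (π j : ℕ) < m)) := by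
        ext j
        simp only [Finset.mem_filter, Finset.mem_insert, Finset.mem_univ, true_and]
        constructor
        · intro h
          rcases Nat.lt_succ_iff_lt_or_eq.mp h with h | h
          · exact Or.inr h
          · left
            have hπ : π j = ⟨m, hm⟩ := Fin.ext h
            rw [← hπ, Equiv.symm_apply_apply]
        · rintro (rfl | h)
          · rw [Equiv.apply_symm_apply]
            exact Nat.lt_succ_self m
          · exact Nat.lt_succ_of_lt h
      have hnotmem : π.symm ⟨m, hm⟩ ∉ Finset.univ.filter (fun j => (π j : ℕ) < m) := by
        simp [Equiv.apply_symm_apply]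
      rw [hset, Finset.sum_insert hnotmem, Finset.sum_insert hnotmem, ih]
      have hfil : Finset.univ.filter (fun l => π l < π (π.symm ⟨m, hm⟩))
          = Finset.univ.filter (fun l => (π l : ℕ) < m) := by
        apply Finset.filter_congr
        intro l _
        rw [Equiv.apply_symm_apply]
        simp [Fin.lt_def]
      rw [hfil]
      have hA : 0 ≤ ∑ l ∈ Finset.univ.filter (fun l => (π l : ℕ) < m), w l :=
        Finset.sum_nonneg fun l _ => hw l
      have hwj := hw (π.symm ⟨m, hm⟩)
      simp only [min_def, max_def]
      split_ifs <;> linarith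
    · have hset : Finset.univ.filter (fun j => (π j : ℕ) < m + 1)
          = Finset.univ.filter (fun j => (π j : ℕ) < m) := by
        apply Finset.filter_congr
        intro j _
        have h1 : (π j : ℕ) < n := (π j).isLt
        constructor
        · intro _; omega
        · intro _; omega
      rw [hset, ih]

/-- Auxiliary: total amount sold equals `min 1 (total demand)`. -/
lemma total_sum_eq {n : ℕ} (π : Equiv.Perm (Fin n)) (w : Fin n → ℝ) (hw : ∀ j, 0 ≤ w j) :
    ∑ j, min (w j) (max 0 (1 - ∑ l ∈ Finset.univ.filter (fun l => π l < π j), w l))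
      = min 1 (∑ j, w j) := by
  have huniv : Finset.univ.filter (fun j : Fin n => (π j : ℕ) < n) = Finset.univ :=
    Finset.filter_true_of_mem fun j _ => (π j).isLt
  have h := seq_sum_eq π w hw n
  rwa [huniv] at h

/-- Auxiliary: replacing the `i`-th coordinate with an independent fresh sample preserves the
product measure. -/
lemma measurePreserving_update_eval {n : ℕ} {Ω : Fin n → Type*} [∀ j, MeasurableSpace (Ω j)]
    (μ : ∀ j, Measure (Ω j)) [∀ j, IsProbabilityMeasure (μ j)] (i : Fin n) :
    MeasurePreserving (fun z : (∀ j, Ω j) × (∀ j, Ω j) => Function.update z.1 i (z.2 i))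
      ((Measure.pi μ).prod (Measure.pi μ)) (Measure.pi μ) := by
  have hmeas : Measurable (fun z : (∀ j, Ω j) × (∀ j, Ω j) => Function.update z.1 i (z.2 i)) :=
    measurable_update'.comp (measurable_fst.prodMk ((measurable_pi_apply i).comp measurable_snd))
  refine ⟨hmeas, ?_⟩
  refine (Measure.pi_eq fun s hs => ?_).symm
  rw [Measure.map_apply hmeas (MeasurableSet.univ_pi hs)]
  have hpre : (fun z : (∀ j, Ω j) × (∀ j, Ω j) => Function.update z.1 i (z.2 i)) ⁻¹'
        (Set.pi Set.univ s)
      = (Set.pi Set.univ (Function.update s i Set.univ)) ×ˢ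
        (Set.pi Set.univ (Function.update (fun j => (Set.univ : Set (Ω j))) i (s i))) := by
    ext z
    simp only [Set.mem_preimage, Set.mem_pi, Set.mem_univ, true_implies, Set.mem_prod]
    constructor
    · intro h
      refine ⟨fun j => ?_, fun j => ?_⟩
      · rcases eq_or_ne j i with rfl | hj
        · rw [Function.update_self]; trivial
        · rw [Function.update_of_ne hj]
          have := h j
          rwa [Function.update_of_ne hj] at this
      · rcases eq_or_ne j i with rfl | hj
        · rw [Function.update_self]
          have := h j
          rwa [Function.update_self] at this
        · rw [Function.update_of_ne hj]; trivial
    · rintro ⟨h1, h2⟩ j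
      rcases eq_or_ne j i with rfl | hj
      · rw [Function.update_self]
        have := h2 j
        rwa [Function.update_self] at this
      · rw [Function.update_of_ne hj]
        have := h1 j
        rwa [Function.update_of_ne hj] at this
  rw [hpre, Measure.prod_prod, Measure.pi_pi, Measure.pi_pi]
  have h2 : (∏ j, μ j (Function.update (fun j => (Set.univ : Set (Ω j))) i (s i) j))
      = μ i (s i) := by
    rw [Finset.prod_eq_single_of_mem i (Finset.mem_univ i)
        (fun j _ hj => by rw [Function.update_of_ne hj]; exact measure_univ),
      Function.update_self]
  have h1 : (∏ j, μ j (Function.update s i Set.univ j))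
      = ∏ j ∈ Finset.univ.erase i, μ j (s j) := by
    rw [Finset.erase_eq]
    have hfun : (fun j => μ j (Function.update s i Set.univ j))
        = Function.update (fun j => μ j (s j)) i 1 := by
      funext j
      rcases eq_or_ne j i with rfl | hj
      · simp
      · simp [Function.update_of_ne hj]
    rw [hfun, Finset.prod_update_of_mem (Finset.mem_univ i), one_mul]
  rw [h2, h1, ← Finset.mul_prod_erase Finset.univ _ (Finset.mem_univ i), mul_comm]

/-- Let β > 0 satisfy e^{1/β} = 2 + 1/β and ρ₁ = e^{−1/β}. If the price p > 0 is
such that sequential posted pricing in the (arbitrary, fixed) order π sells an expected fraction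
E[Σ_i y_i] = ρ₁ of the item, then E[Σ_i v_i(y_i)] ≥ ρ₁·E[Σ_i v_i(x_i)] for every allocation
rule x; in particular the mechanism is a ρ₁-approximation of the optimal social welfare. -/
theorem stmt_1
    {n : ℕ} {Ω : Fin n → Type*} [∀ j, MeasurableSpace (Ω j)]
    (μ : ∀ j, Measure (Ω j)) [∀ j, IsProbabilityMeasure (μ j)]
    (v : ∀ j, Ω j → ℝ → ℝ) (ystar : ∀ j, Ω j → ℝ) (p : ℝ) (hp : 0 < p)
    (hval : ∀ j, ∀ᵐ ωj ∂ μ j, (∀ z ∈ Set.Icc (0:ℝ) 1, 0 ≤ v j ωj z) ∧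
        MonotoneOn (v j ωj) (Set.Icc (0:ℝ) 1) ∧ ConcaveOn ℝ (Set.Icc (0:ℝ) 1) (v j ωj))
    (hystar_meas : ∀ j, Measurable (ystar j))
    (hystar : ∀ j, ∀ᵐ ωj ∂ μ j, ystar j ωj ∈ Set.Icc (0:ℝ) 1 ∧
        ∀ z ∈ Set.Icc (0:ℝ) 1, v j ωj z - p * z ≤ v j ωj (ystar j ωj) - p * ystar j ωj)
    (π : Equiv.Perm (Fin n)) (β : ℝ) (hβ : 0 < β)
    (hβeq : Real.exp (1 / β) = 2 + 1 / β)
    (S y u : Fin n → (∀ j, Ω j) → ℝ)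
    (hS : ∀ i ω, S i ω = ∑ j ∈ Finset.univ.filter (fun j => π j < π i), ystar j (ω j))
    (hy : ∀ i ω, y i ω = min (ystar i (ω i)) (max 0 (1 - S i ω)))
    (hu : ∀ i ω, u i ω = v i (ω i) (y i ω) - p * y i ω)
    (humax : ∀ i, ∀ᵐ ω ∂ Measure.pi μ, ∀ z ∈ Set.Icc (0:ℝ) (max 0 (1 - S i ω)),
        v i (ω i) z - p * z ≤ u i ω)
    -- the expected fraction of the item sold equals ρ₁ = e^{−1/β}
    (hsold : ∫ ω, (∑ i, y i ω) ∂(Measure.pi μ) = Real.exp (-1 / β))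
    -- allocation rule
    (x : (∀ j, Ω j) → Fin n → ℝ) (hx_meas : Measurable x)
    (hx_mem : ∀ ω j, x ω j ∈ Set.Icc (0:ℝ) 1) (hx_sum : ∀ ω, ∑ j, x ω j = 1)
    -- integrability of the displayed random variables
    (hint_u : ∀ i, Integrable (u i) (Measure.pi μ))
    (hint_vy : ∀ i, Integrable (fun ω => v i (ω i) (y i ω)) (Measure.pi μ))
    (hint_y : ∀ i, Integrable (y i) (Measure.pi μ))
    (hint_vx : ∀ i, Integrable (fun ω => v i (ω i) (x ω i)) (Measure.pi μ))
    (hint_x : ∀ i, Integrable (fun ω => x ω i) (Measure.pi μ)) :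
    ∫ ω, (∑ i, v i (ω i) (y i ω)) ∂(Measure.pi μ) ≥
      Real.exp (-1 / β) * ∫ ω, (∑ i, v i (ω i) (x ω i)) ∂(Measure.pi μ) := by
  classical
  set P : Measure (∀ j, Ω j) := Measure.pi μ with hPdef
  set ρ : ℝ := Real.exp (-1 / β) with hρdef
  have hρpos : 0 < ρ := Real.exp_pos _
  -- ρ ≤ 1/2
  have hρhalf : ρ ≤ 1 / 2 := by
    have h2 : (2 : ℝ) ≤ Real.exp (1 / β) := by
      rw [hβeq]
      have : 0 < 1 / β := by positivity
      linarith
    have hexp : ρ = (Real.exp (1 / β))⁻¹ := by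
      rw [hρdef, neg_div, Real.exp_neg]
    rw [hexp]
    rw [inv_le_comm₀ (Real.exp_pos _) (by norm_num : (0:ℝ) < 1/2)]
    have h12 : ((1:ℝ)/2)⁻¹ = 2 := by norm_num
    rw [h12]
    exact h2
  -- transporting a.e. statements about a single coordinate
  have hcoord : ∀ (j : Fin n) (pr : Ω j → Prop), (∀ᵐ ωj ∂μ j, pr ωj) →
      (∀ᵐ ω ∂P, pr (ω j)) := fun j pr h => Measure.tendsto_eval_ae_ae.eventually h
  have hystar_all : ∀ᵐ ω ∂P, ∀ j, ystar j (ω j) ∈ Set.Icc (0:ℝ) 1 :=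
    ae_all_iff.mpr fun j => hcoord j _ ((hystar j).mono fun ωj h => h.1)
  -- total sold pointwise
  have htotal : ∀ᵐ ω ∂P, ∀ i, 1 - ∑ j, y j ω ≤ max 0 (1 - S i ω) := by
    filter_upwards [hystar_all] with ω hω
    intro i
    have hw : ∀ j, 0 ≤ ystar j (ω j) := fun j => (hω j).1
    have htot : ∑ j, y j ω = min 1 (∑ j, ystar j (ω j)) := by
      have := total_sum_eq π (fun j => ystar j (ω j)) hw
      rw [← this]
      refine Finset.sum_congr rfl fun j _ => ?_
      rw [hy, hS]
    have hST : S i ω ≤ ∑ j, ystar j (ω j) := by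
      rw [hS]
      exact Finset.sum_le_sum_of_subset_of_nonneg (Finset.filter_subset _ _)
        (fun j _ _ => hw j)
    rw [htot]
    rcases le_total 1 (∑ j, ystar j (ω j)) with h | h
    · rw [min_eq_left h]
      simpa using le_max_left 0 (1 - S i ω)
    · rw [min_eq_right h]
      have : 1 - ∑ j, ystar j (ω j) ≤ 1 - S i ω := by linarith
      exact le_trans this (le_max_right _ _)
  -- the key per-agent bound
  have hmain : ∀ i : Fin n,
      ρ * (∫ ω, v i (ω i) (x ω i) ∂P - p * ∫ ω, x ω i ∂P) ≤ ∫ ω, u i ω ∂P := by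
    intro i
    set PP : Measure ((∀ j, Ω j) × (∀ j, Ω j)) := P.prod P with hPPdef
    set Φ : (∀ j, Ω j) × (∀ j, Ω j) → (∀ j, Ω j) :=
      fun z => Function.update z.1 i (z.2 i) with hΦdef
    have hΦmp : MeasurePreserving Φ PP P := measurePreserving_update_eval μ i
    have hΦi : ∀ z, Φ z i = z.2 i := fun z => Function.update_self _ _ _
    have hΦS : ∀ z, S i (Φ z) = S i z.1 := by
      intro z
      rw [hS, hS]
      refine Finset.sum_congr rfl fun j hj => ?_
      have hji : j ≠ i := by
        rintro rfl
        exact absurd (Finset.mem_filter.mp hj).2 (lt_irrefl _)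
      rw [hΦdef]
      simp only [Function.update_of_ne hji]
    -- pullback helpers
    have pullΦ : ∀ {Q : (∀ j, Ω j) → Prop}, (∀ᵐ ω ∂P, Q ω) → (∀ᵐ z ∂PP, Q (Φ z)) := by
      intro Q h
      apply ae_of_ae_map hΦmp.measurable.aemeasurable
      rwa [hΦmp.map_eq]
    have pullsnd : ∀ {Q : (∀ j, Ω j) → Prop}, (∀ᵐ ω ∂P, Q ω) → (∀ᵐ z ∂PP, Q z.2) := by
      intro Q h
      apply ae_of_ae_map measurable_snd.aemeasurable
      rwa [Measure.map_snd_prod, measure_univ, one_smul]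
    have pullfst : ∀ {Q : (∀ j, Ω j) → Prop}, (∀ᵐ ω ∂P, Q ω) → (∀ᵐ z ∂PP, Q z.1) := by
      intro Q h
      apply ae_of_ae_map measurable_fst.aemeasurable
      rwa [Measure.map_fst_prod, measure_univ, one_smul]
    set R : (∀ j, Ω j) → ℝ := fun ω => max 0 (1 - S i ω) with hRdef
    set m' : (∀ j, Ω j) → ℝ := fun ω => max (v i (ω i) (x ω i) - p * x ω i) 0 with hmdef
    -- measurability / integrability
    have hSmeas : Measurable (S i) := by
      have : S i = fun ω => ∑ j ∈ Finset.univ.filter (fun j => π j < π i), ystar j (ω j) :=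
        funext (hS i)
      rw [this]
      exact Finset.measurable_sum _ fun j _ => (hystar_meas j).comp (measurable_pi_apply j)
    have hSnonneg : ∀ᵐ ω ∂P, 0 ≤ S i ω := by
      filter_upwards [hystar_all] with ω hω
      rw [hS]
      exact Finset.sum_nonneg fun j _ => (hω j).1
    have hRmeas : Measurable R := measurable_const.max (measurable_const.sub hSmeas)
    have hint_R : Integrable R P := by
      refine (integrable_const (1:ℝ)).mono' hRmeas.aestronglyMeasurable ?_
      filter_upwards [hSnonneg] with ω hω
      rw [Real.norm_eq_abs, abs_of_nonneg (le_max_left _ _)]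
      exact max_le zero_le_one (by linarith)
    have hint_m : Integrable m' P := ((hint_vx i).sub ((hint_x i).const_mul p)).pos_part
    have hint_uΦ : Integrable (fun z => u i (Φ z)) PP := by
      have := (hΦmp.integrable_comp (hint_u i).aestronglyMeasurable).mpr (hint_u i)
      exact this
    -- key pointwise inequality
    have hkey : ∀ᵐ z ∂PP, R z.1 * m' z.2 ≤ u i (Φ z) := by
      have hae1 := pullΦ (humax i)
      have haev := pullsnd (hcoord i _ (hval i))
      have haey := pullsnd (hcoord i _ (hystar i))
      have haeS := pullfst hSnonneg
      filter_upwards [hae1, haev, haey, haeS] with z h1 h2 h3 h4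
      set b := z.2 i with hbdef
      set w := ystar i b with hwdef
      have hw0 : 0 ≤ w := h3.1.1
      have hw1 : w ≤ 1 := h3.1.2
      have hR00 : 0 ≤ R z.1 := le_max_left _ _
      have hR01 : R z.1 ≤ 1 := max_le zero_le_one (by linarith)
      set z₀ := min w (R z.1) with hz₀def
      have hz₀R : z₀ ∈ Set.Icc 0 (R z.1) := ⟨le_min hw0 hR00, min_le_right _ _⟩
      have hz₀1 : z₀ ∈ Set.Icc (0:ℝ) 1 := ⟨hz₀R.1, le_trans (min_le_left _ _) hw1⟩
      have h1' : v i b z₀ - p * z₀ ≤ u i (Φ z) := by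
        have := h1 z₀ (by rw [hΦS z]; exact hz₀R)
        rwa [hΦi z] at this
      have hv0 : 0 ≤ v i b 0 := h2.1 0 ⟨le_rfl, zero_le_one⟩
      have hg0 : 0 ≤ v i b w - p * w := by
        have h := h3.2 0 ⟨le_rfl, zero_le_one⟩
        have : v i b 0 - p * 0 = v i b 0 := by ring
        rw [this] at h
        linarith
      have hmle : m' z.2 ≤ v i b w - p * w :=
        max_le (h3.2 (x z.2 i) (hx_mem z.2 i)) hg0
      have hkey2 : R z.1 * (v i b w - p * w) ≤ v i b z₀ - p * z₀ := by
        rcases le_total w (R z.1) with h | h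
        · rw [hz₀def, min_eq_left h]
          have := mul_le_mul_of_nonneg_right hR01 hg0
          linarith
        · have hz₀eq : z₀ = R z.1 := min_eq_right h
          rcases eq_or_lt_of_le hw0 with hw | hw
          · have hR0 : R z.1 = 0 := le_antisymm (hw ▸ h) hR00
            rw [hz₀eq, hR0]
            simp
            linarith [h2.1 0 ⟨le_rfl, zero_le_one⟩]
          · set t := R z.1 / w with htdef
            have ht0 : 0 ≤ t := div_nonneg hR00 hw0
            have ht1 : t ≤ 1 := by rw [htdef, div_le_one hw]; exact h
            have htw : t * w = R z.1 := div_mul_cancel₀ _ (ne_of_gt hw)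
            have hconc := h2.2.2.2 (⟨le_rfl, zero_le_one⟩ : (0:ℝ) ∈ Set.Icc (0:ℝ) 1)
              (⟨hw0, hw1⟩ : w ∈ Set.Icc (0:ℝ) 1)
              (by linarith : (0:ℝ) ≤ 1 - t) ht0 (by ring)
            simp only [smul_eq_mul, mul_zero, add_zero, zero_add] at hconc
            rw [htw] at hconc
            have htR : R z.1 ≤ t := by
              rw [htdef, le_div_iff₀ hw]
              nlinarith
            rw [hz₀eq]
            nlinarith [mul_nonneg (sub_nonneg.mpr htR) hg0,
              mul_nonneg (sub_nonneg.mpr ht1) hv0]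
      calc R z.1 * m' z.2 ≤ R z.1 * (v i b w - p * w) :=
            mul_le_mul_of_nonneg_left hmle hR00
        _ ≤ v i b z₀ - p * z₀ := hkey2
        _ ≤ u i (Φ z) := h1'
    -- integral comparisons
    have hIeq : ∫ z, u i (Φ z) ∂PP = ∫ ω, u i ω ∂P := by
      have h := integral_map (μ := PP) hΦmp.measurable.aemeasurable
        (f := u i) (by rw [hΦmp.map_eq]; exact (hint_u i).aestronglyMeasurable)
      rw [hΦmp.map_eq] at h
      exact h.symm
    have hmono : ∫ z, R z.1 * m' z.2 ∂PP ≤ ∫ z, u i (Φ z) ∂PP :=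
      integral_mono_ae (hint_R.mul_prod hint_m) hint_uΦ hkey
    have hfact : ∫ z, R z.1 * m' z.2 ∂PP = (∫ ω, R ω ∂P) * ∫ ω, m' ω ∂P :=
      integral_prod_mul R m'
    -- lower bound on ∫ R
    have hint_sumy : Integrable (fun ω => ∑ j, y j ω) P :=
      integrable_finset_sum _ fun j _ => hint_y j
    have hRge : 1 - ρ ≤ ∫ ω, R ω ∂P := by
      have h1 : ∫ ω, (1 - ∑ j, y j ω) ∂P = 1 - ρ := by
        rw [integral_sub (integrable_const 1) hint_sumy, hsold, integral_const]
        simp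
      rw [← h1]
      refine integral_mono_ae (Integrable.sub (integrable_const 1) hint_sumy) hint_R ?_
      filter_upwards [htotal] with ω hω
      exact hω i
    have hρleR : ρ ≤ ∫ ω, R ω ∂P := le_trans (by linarith) hRge
    have hm'nonneg : 0 ≤ ∫ ω, m' ω ∂P := integral_nonneg fun ω => le_max_right _ _
    have hm'ge : ∫ ω, (v i (ω i) (x ω i) - p * x ω i) ∂P ≤ ∫ ω, m' ω ∂P :=
      integral_mono ((hint_vx i).sub ((hint_x i).const_mul p)) hint_m
        fun ω => le_max_left _ _
    have hsplit : ∫ ω, (v i (ω i) (x ω i) - p * x ω i) ∂P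
        = ∫ ω, v i (ω i) (x ω i) ∂P - p * ∫ ω, x ω i ∂P := by
      rw [integral_sub (hint_vx i) ((hint_x i).const_mul p), integral_const_mul p _]
    calc ρ * (∫ ω, v i (ω i) (x ω i) ∂P - p * ∫ ω, x ω i ∂P)
        = ρ * ∫ ω, (v i (ω i) (x ω i) - p * x ω i) ∂P := by rw [hsplit]
      _ ≤ ρ * ∫ ω, m' ω ∂P := mul_le_mul_of_nonneg_left hm'ge (le_of_lt hρpos)
      _ ≤ (∫ ω, R ω ∂P) * ∫ ω, m' ω ∂P := mul_le_mul_of_nonneg_right hρleR hm'nonneg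
      _ = ∫ z, R z.1 * m' z.2 ∂PP := hfact.symm
      _ ≤ ∫ z, u i (Φ z) ∂PP := hmono
      _ = ∫ ω, u i ω ∂P := hIeq
  -- assembling
  have hXsum : ∫ ω, (∑ i, v i (ω i) (x ω i)) ∂P = ∑ i, ∫ ω, v i (ω i) (x ω i) ∂P :=
    integral_finset_sum _ fun i _ => hint_vx i
  have hxs : ∑ i, ∫ ω, x ω i ∂P = 1 := by
    rw [← integral_finset_sum _ fun i _ => hint_x i]
    simp only [hx_sum]
    simp
  have hys : ∑ i, ∫ ω, y i ω ∂P = ρ := by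
    rw [← integral_finset_sum _ fun i _ => hint_y i]
    exact hsold
  have hLHS : ∫ ω, (∑ i, v i (ω i) (y i ω)) ∂P = (∑ i, ∫ ω, u i ω ∂P) + p * ρ := by
    rw [integral_finset_sum _ fun i _ => hint_vy i]
    have heach : ∀ i : Fin n,
        ∫ ω, v i (ω i) (y i ω) ∂P = ∫ ω, u i ω ∂P + p * ∫ ω, y i ω ∂P := by
      intro i
      have hfun : (fun ω => v i (ω i) (y i ω)) = fun ω => u i ω + p * y i ω :=
        funext fun ω => by rw [hu i ω]; ring
      rw [hfun, integral_add (hint_u i) ((hint_y i).const_mul p), integral_const_mul p _]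
    rw [Finset.sum_congr rfl fun i _ => heach i, Finset.sum_add_distrib, ← Finset.mul_sum, hys]
  have hsum_main : ∑ i, ρ * (∫ ω, v i (ω i) (x ω i) ∂P - p * ∫ ω, x ω i ∂P)
      ≤ ∑ i, ∫ ω, u i ω ∂P := Finset.sum_le_sum fun i _ => hmain i
  have hexpand : ∑ i, ρ * (∫ ω, v i (ω i) (x ω i) ∂P - p * ∫ ω, x ω i ∂P)
      = ρ * ((∑ i, ∫ ω, v i (ω i) (x ω i) ∂P) - p) := by
    rw [← Finset.mul_sum, Finset.sum_sub_distrib, ← Finset.mul_sum, hxs, mul_one]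
  rw [hexpand] at hsum_main
  rw [ge_iff_le, hXsum, hLHS]
  have hρp : 0 ≤ p * ρ := by positivity
  nlinarith [hsum_main]
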